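/- Let S = (X_0,…,X_{d−1}) be a d-symbol with balanced quotient Q = Q(S). Let i ≠ j in {0,…,d−1} with Δ = |X_i| − |X_j| > 0. Then for all ℓ > Δ: |H_{ij}^ℓ(S)| = |H_{ij}^{ℓ−Δ}(Q)| and |H_{ji}^{ℓ−Δ}(S)| = |H_{ji}^ℓ(Q)|. -/
import Mathlib


/-- `X^{+s} = (X + s) ∪ {0,…,s−1}` for a β-set `X`. -/
def shiftUp (X : Finset ℕ) (s : ℕ) : Finset ℕ :=
  X.image (· + s) ∪ Finset.range s

/-- The `d`-symbol `s_d(X)` associated to a β-set `X`: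
`X_i^{(d)} = {k ∈ ℕ : i + k*d ∈ X}`. -/
def sd (d : ℕ) (X : Finset ℕ) : Fin d → Finset ℕ :=
  fun i => (X.filter fun a => a % d = (i : ℕ)).image fun a => a / d

/-- The inverse of `s_d`, recovering the β-set of a `d`-symbol. -/
def sdInv (d : ℕ) (S : Fin d → Finset ℕ) : Finset ℕ :=
  Finset.univ.biUnion fun i => (S i).image fun k => (i : ℕ) + k * d

/-- Hooks of a β-set `X`: pairs `(a,b)` with `a > b`, `a ∈ X`, `b ∉ X`. -/
def betaHooks (X : Finset ℕ) : Finset (ℕ × ℕ) :=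
  (X ×ˢ Finset.range (X.sup id + 1)).filter fun p => p.2 < p.1 ∧ p.2 ∉ X

/-- Hooks of a `d`-symbol `S`: quadruples `(a,b,i,j)` with `a ∈ S i`, `b ∉ S j`,
and either `a > b`, or `a = b` and `i > j`. -/
def symbolHooks {d : ℕ} (S : Fin d → Finset ℕ) : Finset (ℕ × ℕ × Fin d × Fin d) :=
  (Finset.range ((Finset.univ.sup fun i => (S i).sup id) + 1) ×ˢ
      Finset.range ((Finset.univ.sup fun i => (S i).sup id) + 1) ×ˢ
      (Finset.univ : Finset (Fin d)) ×ˢ (Finset.univ : Finset (Fin d))).filter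
    fun z => z.1 ∈ S z.2.2.1 ∧ z.2.1 ∉ S z.2.2.2 ∧
      (z.2.1 < z.1 ∨ (z.1 = z.2.1 ∧ z.2.2.2 < z.2.2.1))

/-- The partition `p(X)` of a β-set `X = {a_1 > … > a_t}`, as the multiset of the
nonzero numbers among `a_i − (t−i)`; the element `a` contributes the part
`a − #{b ∈ X : b < a}`. -/
def partitionOf (X : Finset ℕ) : Multiset ℕ :=
  Multiset.filter (· ≠ 0) (X.val.map fun a => a - (X.filter (· < a)).card)

/-- `r`, the maximal number of parts among the partitions `p(X_i)` of a `d`-symbol. -/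
def quotCard {d : ℕ} (S : Fin d → Finset ℕ) : ℕ :=
  Finset.univ.sup fun i => Multiset.card (partitionOf (S i))

/-- `Y` is the balanced quotient `Q(S)` of `S`: each `Y i` is the (unique) β-set of
cardinality `r` with `p(Y i) = p(S i)`, where `r` is the maximal number of parts
among the `p(S i)`. -/
def IsBalancedQuotient {d : ℕ} (S Y : Fin d → Finset ℕ) : Prop :=
  ∀ i, (Y i).card = quotCard S ∧ partitionOf (Y i) = partitionOf (S i)

/-- The core `C(S) = ([x_0],…,[x_{d−1}])` of a `d`-symbol, `x_i = |X_i|`. -/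
def coreSymbol {d : ℕ} (S : Fin d → Finset ℕ) : Fin d → Finset ℕ :=
  fun i => Finset.range (S i).card

/-- The `δ`-length `k(a−b) + c_i − c_j` of a hook `(a,b,i,j)`, for the
`d`-hook data tuple `δ = (c_0,…,c_{d−1};k)`. -/
noncomputable def hookLen {d : ℕ} (c : Fin d → ℝ) (k : ℝ)
    (z : ℕ × ℕ × Fin d × Fin d) : ℝ :=
  k * ((z.1 - z.2.1 : ℕ) : ℝ) + c z.2.2.1 - c z.2.2.2

/-- The multiset `𝓗^δ(S)` of `δ`-lengths of all hooks of `S`. -/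
noncomputable def hookLens {d : ℕ} (c : Fin d → ℝ) (k : ℝ)
    (S : Fin d → Finset ℕ) : Multiset ℝ :=
  (symbolHooks S).val.map (hookLen c k)

/-- `H_{ij}^ℓ(S)`, the set of hooks `(a,b,i,j)` of `S` with `a − b = ℓ`. -/
def Hij {d : ℕ} (S : Fin d → Finset ℕ) (i j : Fin d) (ℓ : ℕ) :
    Finset (ℕ × ℕ × Fin d × Fin d) :=
  (symbolHooks S).filter fun z => z.2.2.1 = i ∧ z.2.2.2 = j ∧ z.1 - z.2.1 = ℓ

/-- The sign-modified length `h̄^{δ_S}` (on hooks of the balanced quotient), where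
`x` records the cardinalities `x_i = |X_i|` of `S`, and `δ_S = (c_i + x_i k; k)`.
For a hook `z = (a,b,u,v)` with `ℓ = a − b`: relabelling so that `Δ = x_i − x_j ≥ 0`,
the sign is `+` if `z` lies in position `(i,j)`, or in position `(j,i)` with `ℓ > Δ`,
or in position `(j,i)` with `ℓ = Δ` and `i < j`; otherwise the sign is `−`. -/
noncomputable def signedLen {d : ℕ} (x : Fin d → ℕ) (c : Fin d → ℝ) (k : ℝ)
    (z : ℕ × ℕ × Fin d × Fin d) : ℝ :=
  if x z.2.2.2 ≤ x z.2.2.1 then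
    k * ((z.1 - z.2.1 : ℕ) : ℝ) + (c z.2.2.1 + (x z.2.2.1 : ℝ) * k)
      - (c z.2.2.2 + (x z.2.2.2 : ℝ) * k)
  else if x z.2.2.2 - x z.2.2.1 < z.1 - z.2.1 ∨
      (z.1 - z.2.1 = x z.2.2.2 - x z.2.2.1 ∧ (z.2.2.2 : ℕ) < (z.2.2.1 : ℕ)) then
    k * ((z.1 - z.2.1 : ℕ) : ℝ) + (c z.2.2.1 + (x z.2.2.1 : ℝ) * k)
      - (c z.2.2.2 + (x z.2.2.2 : ℝ) * k)
  else
    -(k * ((z.1 - z.2.1 : ℕ) : ℝ) + (c z.2.2.1 + (x z.2.2.1 : ℝ) * k)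
      - (c z.2.2.2 + (x z.2.2.2 : ℝ) * k))

/-- The permutation `σ_{d,ℓ,e}` of `ℕ`:
`σ(r(dℓ) + sd + t) = r(dℓ) + sd + ((t + re) mod d)`. -/
def twistFun (d ℓ e : ℕ) (n : ℕ) : ℕ :=
  d * ℓ * (n / (d * ℓ)) + d * (n % (d * ℓ) / d) + (n % d + n / (d * ℓ) * e) % d

def Ncount (X Z : Finset ℕ) (ℓ : ℕ) : ℕ :=
  (X.filter fun a => ℓ ≤ a ∧ a - ℓ ∉ Z).card

lemma shiftUp_zero (A : Finset ℕ) : shiftUp A 0 = A := by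
  simp [shiftUp]

lemma mem_shiftUp_one (A : Finset ℕ) (n : ℕ) :
    n ∈ shiftUp A 1 ↔ n = 0 ∨ ∃ a ∈ A, a + 1 = n := by
  simp [shiftUp, Nat.lt_one_iff, or_comm]

lemma shiftUp_succ (A : Finset ℕ) (s : ℕ) :
    shiftUp A (s + 1) = shiftUp (shiftUp A s) 1 := by
  ext n
  simp only [shiftUp, Finset.mem_union, Finset.mem_image, Finset.mem_range, Nat.lt_one_iff]
  constructor
  · rintro (⟨a, ha, rfl⟩ | h)
    · exact Or.inl ⟨a + s, Or.inl ⟨a, ha, rfl⟩, by ring⟩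
    · rcases Nat.eq_zero_or_pos n with rfl | hn
      · exact Or.inr rfl
      · exact Or.inl ⟨n - 1, Or.inr (by omega), by omega⟩
  · rintro (⟨b, (⟨a, ha, rfl⟩ | hb), rfl⟩ | rfl)
    · exact Or.inl ⟨a, ha, by ring⟩
    · exact Or.inr (by omega)
    · exact Or.inr (by omega)

lemma card_shiftUp_one (A : Finset ℕ) : (shiftUp A 1).card = A.card + 1 := by
  rw [shiftUp, Finset.card_union_of_disjoint, Finset.card_image_of_injective _
    (add_left_injective 1), Finset.card_range]
  simp [Finset.disjoint_left, Nat.lt_one_iff]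

-- F1
lemma Ncount_shift_both (X Z : Finset ℕ) (ℓ : ℕ) (hℓ : 0 < ℓ) :
    Ncount (shiftUp X 1) (shiftUp Z 1) ℓ = Ncount X Z ℓ := by
  unfold Ncount
  symm
  apply Finset.card_bij (fun a _ => a + 1)
  · intro a ha
    simp only [Finset.mem_filter, mem_shiftUp_one] at ha ⊢
    obtain ⟨haX, hla, hnz⟩ := ha
    refine ⟨Or.inr ⟨a, haX, rfl⟩, by omega, ?_⟩
    rintro (h0 | ⟨b, hb, hb1⟩)
    · omega
    · have : b = a - ℓ := by omega
      exact hnz (this ▸ hb)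
  · intro a _ b _ h; omega
  · intro b hb
    simp only [Finset.mem_filter, mem_shiftUp_one] at hb
    obtain ⟨hbX, hlb, hnz⟩ := hb
    rcases hbX with rfl | ⟨a, ha, rfl⟩
    · omega
    · refine ⟨a, Finset.mem_filter.2 ⟨ha, ?_, ?_⟩, rfl⟩
      · by_contra h
        exact hnz (Or.inl (by omega))
      · intro hmem
        exact hnz (Or.inr ⟨a - ℓ, hmem, by omega⟩)

-- F2
lemma Ncount_shift_snd (X Z : Finset ℕ) (ℓ : ℕ) (hℓ : 1 < ℓ) :
    Ncount X (shiftUp Z 1) (ℓ - 1) = Ncount X Z ℓ := by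
  unfold Ncount
  congr 1
  apply Finset.filter_congr
  intro a haX
  simp only [mem_shiftUp_one]
  constructor
  · rintro ⟨h1, h2⟩
    have ha : ℓ ≤ a := by by_contra h; exact h2 (Or.inl (by omega))
    refine ⟨ha, fun hmem => h2 (Or.inr ⟨a - ℓ, hmem, by omega⟩)⟩
  · rintro ⟨h1, h2⟩
    refine ⟨by omega, ?_⟩
    rintro (h0 | ⟨b, hb, hb1⟩)
    · omega
    · have : b = a - ℓ := by omega
      exact h2 (this ▸ hb)

-- F3
lemma Ncount_shift_fst (X Z : Finset ℕ) (ℓ : ℕ) (hℓ : 0 < ℓ) :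
    Ncount (shiftUp Z 1) X ℓ = Ncount Z X (ℓ - 1) := by
  unfold Ncount
  symm
  apply Finset.card_bij (fun a _ => a + 1)
  · intro a ha
    simp only [Finset.mem_filter, mem_shiftUp_one] at ha ⊢
    obtain ⟨haZ, hla, hnz⟩ := ha
    refine ⟨Or.inr ⟨a, haZ, rfl⟩, by omega, ?_⟩
    have : a + 1 - ℓ = a - (ℓ - 1) := by omega
    rw [this]; exact hnz
  · intro a _ b _ h; omega
  · intro b hb
    simp only [Finset.mem_filter, mem_shiftUp_one] at hb
    obtain ⟨hbZ, hlb, hnz⟩ := hb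
    rcases hbZ with rfl | ⟨a, ha, rfl⟩
    · omega
    · refine ⟨a, Finset.mem_filter.2 ⟨ha, by omega, ?_⟩, rfl⟩
      have : a - (ℓ - 1) = a + 1 - ℓ := by omega
      rw [this]; exact hnz

lemma Ncount_shift_both_iter (X Z : Finset ℕ) (ℓ : ℕ) (hℓ : 0 < ℓ) (u : ℕ) :
    Ncount (shiftUp X u) (shiftUp Z u) ℓ = Ncount X Z ℓ := by
  induction u with
  | zero => rw [shiftUp_zero, shiftUp_zero]
  | succ n ih =>
      rw [shiftUp_succ X n, shiftUp_succ Z n, Ncount_shift_both _ _ _ hℓ, ih]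

lemma Ncount_shift_snd_iter (X Z : Finset ℕ) (ℓ k : ℕ) (hk : k < ℓ) :
    Ncount X (shiftUp Z k) (ℓ - k) = Ncount X Z ℓ := by
  induction k with
  | zero => rw [shiftUp_zero]; norm_num
  | succ n ih =>
      have h1 : ℓ - (n + 1) = (ℓ - n) - 1 := by omega
      rw [shiftUp_succ Z n, h1, Ncount_shift_snd _ _ _ (by omega), ih (by omega)]

lemma Ncount_shift_fst_iter (X Z : Finset ℕ) (ℓ k : ℕ) (hk : k < ℓ) :
    Ncount (shiftUp Z k) X ℓ = Ncount Z X (ℓ - k) := by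
  induction k generalizing ℓ with
  | zero => rw [shiftUp_zero]; norm_num
  | succ n ih =>
      rw [shiftUp_succ Z n, Ncount_shift_fst _ _ _ (by omega), ih _ (by omega)]
      congr 1; omega


lemma blw_le (A : Finset ℕ) (a : ℕ) : (A.filter (· < a)).card ≤ a := by
  calc (A.filter (· < a)).card ≤ (Finset.range a).card := by
        apply Finset.card_le_card
        intro x hx
        simp only [Finset.mem_filter] at hx
        simpa using hx.2
    _ = a := Finset.card_range a

lemma blw_lt_card (A : Finset ℕ) (a : ℕ) (ha : a ∈ A) :
    (A.filter (· < a)).card < A.card := by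
  have h : A.filter (· < a) ⊆ A.erase a := by
    intro x hx
    simp only [Finset.mem_filter] at hx
    exact Finset.mem_erase.2 ⟨by omega, hx.1⟩
  calc (A.filter (· < a)).card ≤ (A.erase a).card := Finset.card_le_card h
    _ < A.card := Finset.card_erase_lt_of_mem ha

lemma part_mono (A : Finset ℕ) (a b : ℕ) (hab : a ≤ b) :
    a - (A.filter (· < a)).card ≤ b - (A.filter (· < b)).card := by
  have h : (A.filter (· < b)).card ≤ (A.filter (· < a)).card + (b - a) := by
    have hsub : A.filter (· < b) ⊆ A.filter (· < a) ∪ Finset.Ico a b := by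
      intro x hx
      simp only [Finset.mem_filter, Finset.mem_union, Finset.mem_Ico] at hx ⊢
      rcases lt_or_ge x a with h | h
      · exact Or.inl ⟨hx.1, h⟩
      · exact Or.inr ⟨h, hx.2⟩
    calc (A.filter (· < b)).card ≤ (A.filter (· < a) ∪ Finset.Ico a b).card :=
          Finset.card_le_card hsub
      _ ≤ (A.filter (· < a)).card + (Finset.Ico a b).card := Finset.card_union_le _ _
      _ = (A.filter (· < a)).card + (b - a) := by rw [Nat.card_Ico]
  omega

lemma blw_max' (A : Finset ℕ) (h : A.Nonempty) :
    (A.filter (· < A.max' h)).card = A.card - 1 := by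
  have : A.filter (· < A.max' h) = A.erase (A.max' h) := by
    ext x
    simp only [Finset.mem_filter, Finset.mem_erase]
    constructor
    · rintro ⟨hx, hlt⟩; exact ⟨by omega, hx⟩
    · rintro ⟨hne, hx⟩
      exact ⟨hx, lt_of_le_of_ne (Finset.le_max' A x hx) hne⟩
  rw [this, Finset.card_erase_of_mem (A.max'_mem h)]

lemma blw_shiftUp_one (A : Finset ℕ) (a : ℕ) :
    ((shiftUp A 1).filter (· < a + 1)).card = (A.filter (· < a)).card + 1 := by
  have h : (shiftUp A 1).filter (· < a + 1)
      = insert 0 ((A.filter (· < a)).image (· + 1)) := by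
    ext x
    simp only [Finset.mem_filter, mem_shiftUp_one, Finset.mem_insert, Finset.mem_image]
    constructor
    · rintro ⟨(rfl | ⟨b, hb, rfl⟩), hlt⟩
      · exact Or.inl rfl
      · exact Or.inr ⟨b, ⟨hb, by omega⟩, rfl⟩
    · rintro (rfl | ⟨b, ⟨hb1, hb2⟩, rfl⟩)
      · exact ⟨Or.inl rfl, by omega⟩
      · exact ⟨Or.inr ⟨b, hb1, rfl⟩, by omega⟩
  rw [h, Finset.card_insert_of_notMem (by simp),
    Finset.card_image_of_injective _ (add_left_injective 1)]

lemma shiftUp_one_val (A : Finset ℕ) :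
    (shiftUp A 1).val = 0 ::ₘ A.val.map (· + 1) := by
  have h1 : shiftUp A 1 = insert 0 (A.image (· + 1)) := by
    rw [shiftUp, Finset.range_one, Finset.union_comm, ← Finset.insert_eq]
  rw [h1, Finset.insert_val_of_notMem (by simp),
    Finset.image_val_of_injOn (Set.injOn_of_injective (add_left_injective 1))]

lemma partitionOf_shiftUp_one (A : Finset ℕ) :
    partitionOf (shiftUp A 1) = partitionOf A := by
  unfold partitionOf
  rw [shiftUp_one_val, Multiset.map_cons, Multiset.map_map,
    Multiset.filter_cons_of_neg _ (by simp)]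
  congr 1
  apply Multiset.map_congr rfl
  intro a _
  simp only [Function.comp_apply]
  rw [blw_shiftUp_one]
  omega

lemma card_shiftUp (A : Finset ℕ) (s : ℕ) : (shiftUp A s).card = A.card + s := by
  induction s with
  | zero => rw [shiftUp_zero]; omega
  | succ n ih => rw [shiftUp_succ, card_shiftUp_one, ih]; omega

lemma partitionOf_shiftUp (A : Finset ℕ) (s : ℕ) :
    partitionOf (shiftUp A s) = partitionOf A := by
  induction s with
  | zero => rw [shiftUp_zero]
  | succ n ih => rw [shiftUp_succ, partitionOf_shiftUp_one, ih]

lemma partitionOf_erase_max (A : Finset ℕ) (h : A.Nonempty) :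
    (A.val.map fun a => a - (A.filter (· < a)).card)
      = (A.max' h - (A.card - 1)) ::ₘ
        ((A.erase (A.max' h)).val.map fun a =>
          a - ((A.erase (A.max' h)).filter (· < a)).card) := by
  set m := A.max' h with hm
  have hv : A.val = m ::ₘ (A.erase m).val := by
    rw [Finset.erase_val, Multiset.cons_erase (by exact A.max'_mem h)]
  rw [hv, Multiset.map_cons, blw_max']
  congr 1
  apply Multiset.map_congr rfl
  intro a ha
  have haA : a ∈ A.erase m := ha
  rw [Finset.mem_erase] at haA
  congr 1
  have : (A.erase m).filter (· < a) = A.filter (· < a) := by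
    ext x
    simp only [Finset.mem_filter, Finset.mem_erase]
    constructor
    · rintro ⟨⟨_, hx⟩, hlt⟩; exact ⟨hx, hlt⟩
    · rintro ⟨hx, hlt⟩
      have haM : a ≤ m := A.le_max' a haA.2
      exact ⟨⟨by omega, hx⟩, hlt⟩
  rw [this]

lemma filter_ne_cons (a : ℕ) (s : Multiset ℕ) (h : a ≠ 0) :
    Multiset.filter (· ≠ 0) (a ::ₘ s) = a ::ₘ Multiset.filter (· ≠ 0) s :=
  Multiset.filter_cons_of_pos s h

lemma range_of_partitionOf_eq_zero (A : Finset ℕ) (h : partitionOf A = 0) :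
    A = Finset.range A.card := by
  have hall : ∀ a ∈ A, a - (A.filter (· < a)).card = 0 := by
    intro a ha
    by_contra hne
    have hmem : (a - (A.filter (· < a)).card) ∈ partitionOf A := by
      unfold partitionOf
      rw [Multiset.mem_filter]
      exact ⟨Multiset.mem_map_of_mem _ ha, hne⟩
    rw [h] at hmem
    exact absurd hmem (Multiset.notMem_zero _)
  apply Finset.eq_of_subset_of_card_le ?_ (by rw [Finset.card_range])
  intro a ha
  rw [Finset.mem_range]
  have h1 := hall a ha
  have h2 := blw_lt_card A a ha
  omega

lemma max_partitionOf (A : Finset ℕ) (h0 : partitionOf A ≠ 0) :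
    ∃ hne : A.Nonempty,
      (A.max' hne - (A.card - 1)) ∈ partitionOf A ∧
      ∀ x ∈ partitionOf A, x ≤ A.max' hne - (A.card - 1) := by
  obtain ⟨x, hx⟩ := Multiset.exists_mem_of_ne_zero h0
  have hx' := hx
  unfold partitionOf at hx'
  rw [Multiset.mem_filter, Multiset.mem_map] at hx'
  obtain ⟨⟨a0, ha0, _⟩, hxne⟩ := hx'
  have hne : A.Nonempty := ⟨a0, ha0⟩
  have hfm : A.max' hne - (A.filter (· < A.max' hne)).card
      = A.max' hne - (A.card - 1) := by rw [blw_max']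
  have hub : ∀ y ∈ partitionOf A, y ≤ A.max' hne - (A.card - 1) := by
    intro y hy
    unfold partitionOf at hy
    rw [Multiset.mem_filter, Multiset.mem_map] at hy
    obtain ⟨⟨b, hb, rfl⟩, _⟩ := hy
    rw [← hfm]
    exact part_mono A b (A.max' hne) (A.le_max' b hb)
  refine ⟨hne, ?_, hub⟩
  have hxle := hub x hx
  have hfnz : A.max' hne - (A.card - 1) ≠ 0 := by omega
  unfold partitionOf
  rw [Multiset.mem_filter]
  refine ⟨?_, hfnz⟩
  rw [Multiset.mem_map]
  exact ⟨A.max' hne, A.max'_mem hne, hfm⟩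

lemma partitionOf_card_unique : ∀ (n : ℕ) (A B : Finset ℕ), A.card = n → B.card = n →
    partitionOf A = partitionOf B → A = B := by
  intro n
  induction n with
  | zero =>
      intro A B hA hB _
      rw [Finset.card_eq_zero] at hA hB
      rw [hA, hB]
  | succ n ih =>
      intro A B hA hB hp
      by_cases h0 : partitionOf A = 0
      · have h0B : partitionOf B = 0 := by rw [← hp]; exact h0
        rw [range_of_partitionOf_eq_zero A h0, range_of_partitionOf_eq_zero B h0B, hA, hB]
      · have h0B : partitionOf B ≠ 0 := by rw [← hp]; exact h0
        obtain ⟨hneA, hmemA, hmaxA⟩ := max_partitionOf A h0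
        obtain ⟨hneB, hmemB, hmaxB⟩ := max_partitionOf B h0B
        have hmemA' : A.max' hneA - (A.card - 1) ∈ partitionOf B := by
          rw [← hp]; exact hmemA
        have hmemB' : B.max' hneB - (B.card - 1) ∈ partitionOf A := by
          rw [hp]; exact hmemB
        have hveq : A.max' hneA - (A.card - 1) = B.max' hneB - (B.card - 1) :=
          le_antisymm (hmaxB _ hmemA') (hmaxA _ hmemB')
        have hA1 : A.card - 1 ≤ A.max' hneA := by
          have := blw_le A (A.max' hneA)
          rw [blw_max' A hneA] at this
          exact this
        have hB1 : B.card - 1 ≤ B.max' hneB := by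
          have := blw_le B (B.max' hneB)
          rw [blw_max' B hneB] at this
          exact this
        have hvnzA : A.max' hneA - (A.card - 1) ≠ 0 := by
          have h' := hmemA
          unfold partitionOf at h'
          exact (Multiset.mem_filter.1 h').2
        have hm : A.max' hneA = B.max' hneB := by omega
        have hpA : partitionOf A
            = (A.max' hneA - (A.card - 1)) ::ₘ partitionOf (A.erase (A.max' hneA)) := by
          unfold partitionOf
          rw [partitionOf_erase_max A hneA, filter_ne_cons _ _ hvnzA]
        have hvnzB : B.max' hneB - (B.card - 1) ≠ 0 := by
          have h' := hmemB
          unfold partitionOf at h'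
          exact (Multiset.mem_filter.1 h').2
        have hpB : partitionOf B
            = (B.max' hneB - (B.card - 1)) ::ₘ partitionOf (B.erase (B.max' hneB)) := by
          unfold partitionOf
          rw [partitionOf_erase_max B hneB, filter_ne_cons _ _ hvnzB]
        have hptail : partitionOf (A.erase (A.max' hneA))
            = partitionOf (B.erase (B.max' hneB)) := by
          have h' := hp
          rw [hpA, hpB, ← hveq] at h'
          exact (Multiset.cons_inj_right _).1 h'
        have herase : A.erase (A.max' hneA) = B.erase (B.max' hneB) := by
          apply ih _ _ ?_ ?_ hptail
          · rw [Finset.card_erase_of_mem (A.max'_mem hneA), hA]; rfl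
          · rw [Finset.card_erase_of_mem (B.max'_mem hneB), hB]; rfl
        have : A = insert (A.max' hneA) (A.erase (A.max' hneA)) :=
          (Finset.insert_erase (A.max'_mem hneA)).symm
        rw [this, herase, hm, Finset.insert_erase (B.max'_mem hneB)]

lemma eq_shiftUp_of_partitionOf_eq (A B : Finset ℕ) (hc : A.card ≤ B.card)
    (hp : partitionOf A = partitionOf B) : B = shiftUp A (B.card - A.card) := by
  apply partitionOf_card_unique B.card B _ rfl
  · rw [card_shiftUp]; omega
  · rw [partitionOf_shiftUp, hp]

lemma shiftUp_add (A : Finset ℕ) (s t : ℕ) :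
    shiftUp A (s + t) = shiftUp (shiftUp A s) t := by
  induction t with
  | zero => rw [Nat.add_zero, shiftUp_zero]
  | succ n ih =>
      rw [show s + (n + 1) = (s + n) + 1 from rfl, shiftUp_succ A (s + n), ih,
        shiftUp_succ (shiftUp A s) n]





lemma card_Hij_eq {d : ℕ} (S : Fin d → Finset ℕ) (i j : Fin d) (ℓ : ℕ) (hℓ : 0 < ℓ) :
    (Hij S i j ℓ).card = Ncount (S i) (S j) ℓ := by
  unfold Hij symbolHooks Ncount
  rw [Finset.filter_filter]
  apply Finset.card_bij (fun z _ => z.1)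
  · rintro ⟨a, b, u, v⟩ hz
    simp only [Finset.mem_filter, Finset.mem_product, Finset.mem_range] at hz
    obtain ⟨⟨-, -, -, -⟩, ⟨haS, hbS, hook⟩, rfl, rfl, hab⟩ := hz
    simp only [Finset.mem_filter]
    have hba : b < a := by
      rcases hook with h | ⟨h, _⟩
      · exact h
      · omega
    refine ⟨haS, by omega, ?_⟩
    have : a - ℓ = b := by omega
    rw [this]; exact hbS
  · rintro ⟨a, b, u, v⟩ hz ⟨a', b', u', v'⟩ hz' (h : a = a')
    simp only [Finset.mem_filter, Finset.mem_product, Finset.mem_range] at hz hz'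
    obtain ⟨-, ⟨-, -, hook⟩, rfl, rfl, hab⟩ := hz
    obtain ⟨-, ⟨-, -, hook'⟩, hu', hv', hab'⟩ := hz'
    subst h hu' hv'
    have : b = b' := by
      rcases hook with h1 | ⟨h1, _⟩ <;> rcases hook' with h2 | ⟨h2, _⟩ <;> omega
    rw [this]
  · intro a ha
    simp only [Finset.mem_filter] at ha
    obtain ⟨haS, hla, hnb⟩ := ha
    refine ⟨(a, a - ℓ, i, j), ?_, rfl⟩
    have hbound : a < (Finset.univ.sup fun i => (S i).sup id) + 1 := by
      have h1 : (S i).sup id ≤ Finset.univ.sup fun i => (S i).sup id :=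
        Finset.le_sup (f := fun i => (S i).sup id) (Finset.mem_univ i)
      have h2 : a ≤ (S i).sup id := Finset.le_sup (f := id) haS
      omega
    simp only [Finset.mem_filter, Finset.mem_product, Finset.mem_range]
    exact ⟨⟨hbound, by omega, Finset.mem_univ _, Finset.mem_univ _⟩,
      ⟨haS, hnb, Or.inl (by omega)⟩, trivial, trivial, by omega⟩


/-- For `i ≠ j` with `Δ = |X_i| − |X_j| > 0` and all `ℓ > Δ`:
`|H_{ij}^ℓ(S)| = |H_{ij}^{ℓ−Δ}(Q)|` and `|H_{ji}^{ℓ−Δ}(S)| = |H_{ji}^ℓ(Q)|`. -/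
theorem card_Hij_of_gt_delta (d : ℕ) (hd : 0 < d) (S Y : Fin d → Finset ℕ)
    (hY : IsBalancedQuotient S Y) (i j : Fin d) (hij : i ≠ j)
    (hΔ : (S j).card < (S i).card) (ℓ : ℕ) (hℓ : (S i).card - (S j).card < ℓ) :
    (Hij S i j ℓ).card = (Hij Y i j (ℓ - ((S i).card - (S j).card))).card ∧
    (Hij S j i (ℓ - ((S i).card - (S j).card))).card = (Hij Y j i ℓ).card := by
  set xi := (S i).card with hxi
  set xj := (S j).card with hxj
  set Δ := xi - xj with hΔdef
  set r := quotCard S with hr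
  set R := r + xi + xj with hR
  have hYi := hY i
  have hYj := hY j
  have hAstar : shiftUp (S i) (R - xi) = shiftUp (Y i) (R - r) := by
    apply partitionOf_card_unique R
    · rw [card_shiftUp]; omega
    · rw [card_shiftUp, hYi.1]; omega
    · rw [partitionOf_shiftUp, partitionOf_shiftUp, hYi.2]
  have hZstar : shiftUp (S j) (R - xj) = shiftUp (Y j) (R - r) := by
    apply partitionOf_card_unique R
    · rw [card_shiftUp]; omega
    · rw [card_shiftUp, hYj.1]; omega
    · rw [partitionOf_shiftUp, partitionOf_shiftUp, hYj.2]
  have hsplit : shiftUp (S j) (R - xj) = shiftUp (shiftUp (S j) (R - xi)) Δ := by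
    rw [← shiftUp_add]
    congr 1
    omega
  constructor
  · rw [card_Hij_eq S i j ℓ (by omega), card_Hij_eq Y i j (ℓ - Δ) (by omega)]
    calc Ncount (S i) (S j) ℓ
        = Ncount (shiftUp (S i) (R - xi)) (shiftUp (S j) (R - xi)) ℓ :=
          (Ncount_shift_both_iter _ _ _ (by omega) _).symm
      _ = Ncount (shiftUp (S i) (R - xi)) (shiftUp (shiftUp (S j) (R - xi)) Δ) (ℓ - Δ) :=
          (Ncount_shift_snd_iter _ _ _ _ (by omega)).symm
      _ = Ncount (shiftUp (Y i) (R - r)) (shiftUp (Y j) (R - r)) (ℓ - Δ) := by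
          rw [← hsplit, hAstar, hZstar]
      _ = Ncount (Y i) (Y j) (ℓ - Δ) := Ncount_shift_both_iter _ _ _ (by omega) _
  · rw [card_Hij_eq S j i (ℓ - Δ) (by omega), card_Hij_eq Y j i ℓ (by omega)]
    calc Ncount (S j) (S i) (ℓ - Δ)
        = Ncount (shiftUp (S j) (R - xi)) (shiftUp (S i) (R - xi)) (ℓ - Δ) :=
          (Ncount_shift_both_iter _ _ _ (by omega) _).symm
      _ = Ncount (shiftUp (shiftUp (S j) (R - xi)) Δ) (shiftUp (S i) (R - xi)) ℓ :=
          (Ncount_shift_fst_iter _ _ _ _ (by omega)).symm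
      _ = Ncount (shiftUp (Y j) (R - r)) (shiftUp (Y i) (R - r)) ℓ := by
          rw [← hsplit, hAstar, hZstar]
      _ = Ncount (Y j) (Y i) ℓ := Ncount_shift_both_iter _ _ _ (by omega) _
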